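/- Structure of two-qubit product bases: every orthonormal basis of ℂ² ⊗ ℂ² consisting of product vectors is, up to reordering of its four elements, multiplication of elements by unit complex phases, and possibly swapping the two tensor factors, of the form {ψ₁⊗ψ₂, ψ₁⊗ψ₂^⊥, ψ₁^⊥⊗ψ₃, ψ₁^⊥⊗ψ₃^⊥} for some unit vectors ψ₁, ψ₂, ψ₃ ∈ ℂ², where for a unit vector φ ∈ ℂ², φ^⊥ denotes a unit vector orthogonal to φ. -/

import Mathlib

open scoped InnerProductSpace
open MeasureTheory

noncomputable section

abbrev Qubit : Type := EuclideanSpace ℂ (Fin 2)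
abbrev NQubit (n : ℕ) : Type := EuclideanSpace ℂ (Fin n → Fin 2)

/-- The product vector `ψ₁ ⊗ ⋯ ⊗ ψₙ` in `(ℂ²)^{⊗n}`, modelled concretely as
`EuclideanSpace ℂ (Fin n → Fin 2)`; its inner products satisfy
`⟨tens ψ, tens χ⟩ = ∏ j, ⟨ψ j, χ j⟩`. -/
noncomputable def tens {n : ℕ} (ψ : Fin n → Qubit) : NQubit n :=
  WithLp.toLp 2 (fun f => ∏ j, ψ j (f j))

/-- A vector of `(ℂ²)^{⊗n}` is a product vector if it is of the form `ψ₁ ⊗ ⋯ ⊗ ψₙ`. -/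
def IsProduct {n : ℕ} (v : NQubit n) : Prop := ∃ ψ : Fin n → Qubit, v = tens ψ

/-- A finite set of vectors forming an orthonormal basis of `H`. -/
def IsONBasis {H : Type*} [NormedAddCommGroup H] [InnerProductSpace ℂ H]
    (B : Finset H) : Prop :=
  Orthonormal ℂ (fun v : B => (v : H)) ∧ Submodule.span ℂ (B : Set H) = ⊤

/-- A KS-colouring of a set `S` of unit vectors: a `{0,1}`-valued map (modelled as a
predicate, `c v` meaning value `1`) such that every orthonormal basis contained in `S`
has exactly one element of value `1`, and no two mutually orthogonal elements of `S`
both have value `1`. -/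
def IsKSColouring {H : Type*} [NormedAddCommGroup H] [InnerProductSpace ℂ H]
    (S : Set H) (c : H → Prop) : Prop :=
  (∀ B : Finset H, ↑B ⊆ S → IsONBasis B → ∃! v, v ∈ B ∧ c v) ∧
  (∀ ψ ∈ S, ∀ χ ∈ S, ⟪ψ, χ⟫_ℂ = 0 → ¬(c ψ ∧ c χ))
/-- `pairT false a c = a ⊗ c` and `pairT true a c = c ⊗ a` in `ℂ² ⊗ ℂ²`; the Boolean
records a possible swap of the two tensor factors. -/
noncomputable def pairT (s : Bool) (a c : Qubit) : NQubit 2 :=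
  if s then tens ![c, a] else tens ![a, c]

lemma sum_fn_two (g h : Fin 2 → ℂ) :
    ∑ f : Fin 2 → Fin 2, g (f 0) * h (f 1) = (∑ i, g i) * (∑ j, h j) := by
  calc ∑ f : Fin 2 → Fin 2, g (f 0) * h (f 1)
      = ∑ p : Fin 2 × Fin 2, g p.1 * h p.2 :=
        Fintype.sum_equiv (piFinTwoEquiv fun _ => Fin 2) _ _ (fun f => rfl)
    _ = (∑ i, g i) * (∑ j, h j) := by
        rw [Fintype.sum_prod_type, Finset.sum_mul_sum]

lemma inner_tens (ψ χ : Fin 2 → Qubit) :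
    ⟪tens ψ, tens χ⟫_ℂ = ⟪ψ 0, χ 0⟫_ℂ * ⟪ψ 1, χ 1⟫_ℂ := by
  have h1 : ⟪tens ψ, tens χ⟫_ℂ
      = ∑ f : Fin 2 → Fin 2,
          (starRingEnd ℂ (ψ 0 (f 0)) * χ 0 (f 0)) * (starRingEnd ℂ (ψ 1 (f 1)) * χ 1 (f 1)) := by
    rw [PiLp.inner_apply]
    refine Finset.sum_congr rfl fun f _ => ?_
    simp [tens, Fin.prod_univ_two, RCLike.inner_apply, map_mul]
    ring
  rw [h1, PiLp.inner_apply, PiLp.inner_apply]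
  simp only [RCLike.inner_apply]
  refine (Finset.sum_congr rfl fun f _ => ?_).trans
    (sum_fn_two (fun i => χ 0 i * starRingEnd ℂ (ψ 0 i)) (fun j => χ 1 j * starRingEnd ℂ (ψ 1 j)))
  ring

lemma tens_smul_left (r : ℂ) (x y : Qubit) :
    tens ![r • x, y] = r • tens ![x, y] := by
  ext f
  show (∏ j, (![r • x, y]) j (f j)) = (r • tens ![x, y]) f
  simp [tens, Fin.prod_univ_two, PiLp.smul_apply, smul_eq_mul]
  ring

lemma tens_smul_right (r : ℂ) (x y : Qubit) :
    tens ![x, r • y] = r • tens ![x, y] := by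
  ext f
  show (∏ j, (![x, r • y]) j (f j)) = (r • tens ![x, y]) f
  simp [tens, Fin.prod_univ_two, PiLp.smul_apply, smul_eq_mul]
  ring

-- expansion in an orthonormal pair basis of ℂ²
lemma expand_pair (a x : Qubit) (ha : ‖a‖ = 1) (hx : ‖x‖ = 1) (hax : ⟪a, x⟫_ℂ = 0)
    (z : Qubit) : z = ⟪a, z⟫_ℂ • a + ⟪x, z⟫_ℂ • x := by
  have hxa : ⟪x, a⟫_ℂ = 0 := by rw [← inner_conj_symm, hax, map_zero]
  have hli : LinearIndependent ℂ ![a, x] := by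
    rw [LinearIndependent.pair_iff]
    intro s t hst
    have h1 : ⟪a, s • a + t • x⟫_ℂ = s := by
      rw [inner_add_right, inner_smul_right, inner_smul_right, hax,
        inner_self_eq_norm_sq_to_K, ha]
      simp
    have h2 : ⟪x, s • a + t • x⟫_ℂ = t := by
      rw [inner_add_right, inner_smul_right, inner_smul_right, hxa,
        inner_self_eq_norm_sq_to_K, hx]
      simp
    rw [hst, inner_zero_right] at h1 h2
    exact ⟨h1.symm, h2.symm⟩
  have hspan : Submodule.span ℂ (Set.range ![a, x]) = ⊤ := by
    apply hli.span_eq_top_of_card_eq_finrank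
    simp [finrank_euclideanSpace]
  set w : Qubit := z - ⟪a, z⟫_ℂ • a - ⟪x, z⟫_ℂ • x with hw
  have hwa : ⟪a, w⟫_ℂ = 0 := by
    rw [hw]
    rw [inner_sub_right, inner_sub_right, inner_smul_right, inner_smul_right, hax,
      inner_self_eq_norm_sq_to_K, ha]
    simp
  have hwx : ⟪x, w⟫_ℂ = 0 := by
    rw [hw]
    rw [inner_sub_right, inner_sub_right, inner_smul_right, inner_smul_right, hxa,
      inner_self_eq_norm_sq_to_K, hx]
    simp
  have hwmem : w ∈ Submodule.span ℂ (Set.range ![a, x]) := by rw [hspan]; trivial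
  obtain ⟨co, hco⟩ := (Submodule.mem_span_range_iff_exists_fun ℂ).1 hwmem
  have hsum : co 0 • a + co 1 • x = w := by
    rw [← hco, Fin.sum_univ_two]
    simp
  have e1 : co 0 = 0 := by
    have : ⟪a, w⟫_ℂ = co 0 := by
      rw [← hsum, inner_add_right, inner_smul_right, inner_smul_right, hax,
        inner_self_eq_norm_sq_to_K, ha]
      simp
    rw [hwa] at this; exact this.symm
  have e2 : co 1 = 0 := by
    have : ⟪x, w⟫_ℂ = co 1 := by
      rw [← hsum, inner_add_right, inner_smul_right, inner_smul_right, hxa,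
        inner_self_eq_norm_sq_to_K, hx]
      simp
    rw [hwx] at this; exact this.symm
  have hw0 : w = 0 := by rw [← hsum, e1, e2]; simp
  have : z - (⟪a, z⟫_ℂ • a + ⟪x, z⟫_ℂ • x) = 0 := by rw [← sub_sub]; exact hw0
  exact eq_of_sub_eq_zero this

/-- Two unit vectors orthogonal to the same unit vector in ℂ² are proportional
by a unit phase. -/
lemma perp_phase (a x y : Qubit) (ha : ‖a‖ = 1) (hx : ‖x‖ = 1) (hy : ‖y‖ = 1)
    (hax : ⟪a, x⟫_ℂ = 0) (hay : ⟪a, y⟫_ℂ = 0) :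
    ∃ u : ℂ, ‖u‖ = 1 ∧ y = u • x := by
  have h := expand_pair a x ha hx hax y
  rw [hay] at h
  simp only [zero_smul, zero_add] at h
  refine ⟨⟪x, y⟫_ℂ, ?_, h⟩
  have hn := congrArg norm h
  rw [norm_smul, hx, mul_one, hy] at hn
  exact hn.symm

/-- There are no three mutually orthogonal unit vectors in ℂ². -/
lemma no_three_orth (x y z : Qubit) (hx : ‖x‖ = 1) (hy : ‖y‖ = 1) (hz : ‖z‖ = 1)
    (hxy : ⟪x, y⟫_ℂ = 0) (hxz : ⟪x, z⟫_ℂ = 0) (hyz : ⟪y, z⟫_ℂ = 0) : False := by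
  have h := expand_pair x y hx hy hxy z
  rw [hxz, hyz] at h
  simp only [zero_smul, zero_add, add_zero] at h
  rw [h] at hz
  simp at hz

lemma inner_ne_zero_of_phase (x y : Qubit) (hx : ‖x‖ = 1) (u : ℂ) (hu : ‖u‖ = 1)
    (h : y = u • x) : ⟪x, y⟫_ℂ ≠ 0 := by
  rw [h, inner_smul_right, inner_self_eq_norm_sq_to_K, hx]
  simp
  exact fun h0 => by simp [h0] at hu

def Good (a c : Fin 4 → Qubit) (π : Equiv.Perm (Fin 4)) : Prop :=
  ⟪a (π 0), a (π 2)⟫_ℂ = 0 ∧ ⟪c (π 0), c (π 1)⟫_ℂ = 0 ∧ ⟪c (π 2), c (π 3)⟫_ℂ = 0 ∧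
  (∃ u : ℂ, ‖u‖ = 1 ∧ a (π 1) = u • a (π 0)) ∧
  (∃ u : ℂ, ‖u‖ = 1 ∧ a (π 3) = u • a (π 2))

lemma half' (a c : Fin 4 → Qubit) (ha : ∀ i, ‖a i‖ = 1) (hc : ∀ i, ‖c i‖ = 1)
    (horth : ∀ i j, i ≠ j → ⟪a i, a j⟫_ℂ * ⟪c i, c j⟫_ℂ = 0)
    (h1 : ⟪a 0, a 1⟫_ℂ = 0) (h2 : ⟪a 0, a 2⟫_ℂ = 0) :
    ∃ π : Equiv.Perm (Fin 4), Good a c π := by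
  obtain ⟨u, hu, hprop⟩ := perp_phase (a 0) (a 1) (a 2) (ha 0) (ha 1) (ha 2) h1 h2
  have hA12 : ⟪a 1, a 2⟫_ℂ ≠ 0 := inner_ne_zero_of_phase (a 1) (a 2) (ha 1) u hu hprop
  have C12 : ⟪c 1, c 2⟫_ℂ = 0 := by
    rcases mul_eq_zero.1 (horth 1 2 (by decide)) with h | h
    · exact absurd h hA12
    · exact h
  have hA03 : ⟪a 0, a 3⟫_ℂ ≠ 0 := by
    intro h3
    obtain ⟨u', hu', hp'⟩ := perp_phase (a 0) (a 1) (a 3) (ha 0) (ha 1) (ha 3) h1 h3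
    obtain ⟨u'', hu'', hp''⟩ := perp_phase (a 0) (a 2) (a 3) (ha 0) (ha 2) (ha 3) h2 h3
    have C13 : ⟪c 1, c 3⟫_ℂ = 0 := by
      rcases mul_eq_zero.1 (horth 1 3 (by decide)) with h | h
      · exact absurd h (inner_ne_zero_of_phase (a 1) (a 3) (ha 1) u' hu' hp')
      · exact h
    have C23 : ⟪c 2, c 3⟫_ℂ = 0 := by
      rcases mul_eq_zero.1 (horth 2 3 (by decide)) with h | h
      · exact absurd h (inner_ne_zero_of_phase (a 2) (a 3) (ha 2) u'' hu'' hp'')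
      · exact h
    exact no_three_orth (c 1) (c 2) (c 3) (hc 1) (hc 2) (hc 3) C12 C13 C23
  have C03 : ⟪c 0, c 3⟫_ℂ = 0 := by
    rcases mul_eq_zero.1 (horth 0 3 (by decide)) with h | h
    · exact absurd h hA03
    · exact h
  have noCC : ¬(⟪c 1, c 3⟫_ℂ = 0 ∧ ⟪c 2, c 3⟫_ℂ = 0) := by
    rintro ⟨C13, C23⟩
    exact no_three_orth (c 1) (c 2) (c 3) (hc 1) (hc 2) (hc 3) C12 C13 C23
  by_cases hC13 : ⟪c 1, c 3⟫_ℂ = 0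
  · -- then ¬C23, so A23
    have hC23 : ⟪c 2, c 3⟫_ℂ ≠ 0 := fun h => noCC ⟨hC13, h⟩
    have A23 : ⟪a 2, a 3⟫_ℂ = 0 := by
      rcases mul_eq_zero.1 (horth 2 3 (by decide)) with h | h
      · exact h
      · exact absurd h hC23
    have h20 : ⟪a 2, a 0⟫_ℂ = 0 := by rw [← inner_conj_symm, h2, map_zero]
    obtain ⟨u₃, hu₃, hp₃⟩ := perp_phase (a 2) (a 0) (a 3) (ha 2) (ha 0) (ha 3) h20 A23
    refine ⟨Equiv.swap 1 3, ?_, ?_, ?_, ?_, ?_⟩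
    · simpa [Equiv.swap_apply_def] using h2
    · simpa [Equiv.swap_apply_def] using C03
    · simpa [Equiv.swap_apply_def] using (by rw [← inner_conj_symm, C12, map_zero] : ⟪c 2, c 1⟫_ℂ = 0)
    · exact ⟨u₃, hu₃, by simpa [Equiv.swap_apply_def] using hp₃⟩
    · refine ⟨u⁻¹, by simp [hu], ?_⟩
      have hune : u ≠ 0 := fun h0 => by simp [h0] at hu
      have : a 1 = u⁻¹ • a 2 := by rw [hprop, smul_smul, inv_mul_cancel₀ hune, one_smul]
      simpa [Equiv.swap_apply_def] using this
  · -- ¬C13, so A13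
    have A13 : ⟪a 1, a 3⟫_ℂ = 0 := by
      rcases mul_eq_zero.1 (horth 1 3 (by decide)) with h | h
      · exact h
      · exact absurd h hC13
    have h10 : ⟪a 1, a 0⟫_ℂ = 0 := by rw [← inner_conj_symm, h1, map_zero]
    obtain ⟨u₃, hu₃, hp₃⟩ := perp_phase (a 1) (a 0) (a 3) (ha 1) (ha 0) (ha 3) h10 A13
    -- π : 0↦0, 1↦3, 2↦1, 3↦2
    refine ⟨(Equiv.swap 1 2).trans (Equiv.swap 2 3), ?_, ?_, ?_, ?_, ?_⟩
    · simpa [Equiv.swap_apply_def] using h1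
    · simpa [Equiv.swap_apply_def] using C03
    · simpa [Equiv.swap_apply_def] using C12
    · exact ⟨u₃, hu₃, by simpa [Equiv.swap_apply_def] using hp₃⟩
    · exact ⟨u, hu, by simpa [Equiv.swap_apply_def] using hprop⟩

lemma half_sigma (a c : Fin 4 → Qubit) (ha : ∀ i, ‖a i‖ = 1) (hc : ∀ i, ‖c i‖ = 1)
    (horth : ∀ i j, i ≠ j → ⟪a i, a j⟫_ℂ * ⟪c i, c j⟫_ℂ = 0)
    (σ : Equiv.Perm (Fin 4))
    (h1 : ⟪a (σ 0), a (σ 1)⟫_ℂ = 0) (h2 : ⟪a (σ 0), a (σ 2)⟫_ℂ = 0) :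
    ∃ π : Equiv.Perm (Fin 4), Good a c π := by
  obtain ⟨π, hπ⟩ := half' (a ∘ σ) (c ∘ σ) (fun i => ha _) (fun i => hc _)
    (fun i j hij => horth _ _ (fun h => hij (σ.injective h))) h1 h2
  exact ⟨π.trans σ, hπ⟩

lemma matching (a c : Fin 4 → Qubit) (ha : ∀ i, ‖a i‖ = 1) (hc : ∀ i, ‖c i‖ = 1)
    (horth : ∀ i j, i ≠ j → ⟪a i, a j⟫_ℂ * ⟪c i, c j⟫_ℂ = 0) :
    (∃ π : Equiv.Perm (Fin 4), Good a c π) ∨ (∃ π : Equiv.Perm (Fin 4), Good c a π) := by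
  have horth' : ∀ i j, i ≠ j → ⟪c i, c j⟫_ℂ * ⟪a i, a j⟫_ℂ = 0 := fun i j hij => by
    rw [mul_comm]; exact horth i j hij
  have hC : ∀ j : Fin 4, j ≠ 0 → ⟪a 0, a j⟫_ℂ ≠ 0 → ⟪c 0, c j⟫_ℂ = 0 := by
    intro j hj h
    rcases mul_eq_zero.1 (horth 0 j (Ne.symm hj)) with h' | h'
    · exact absurd h' h
    · exact h'
  -- σ₂ : 0↦0, 1↦2, 2↦3, 3↦1
  set σ₂ : Equiv.Perm (Fin 4) := (Equiv.swap 2 3).trans (Equiv.swap 1 2) with hσ₂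
  by_cases A1 : ⟪a 0, a 1⟫_ℂ = 0
  · by_cases A2 : ⟪a 0, a 2⟫_ℂ = 0
    · exact Or.inl (half_sigma a c ha hc horth (Equiv.refl _) A1 A2)
    · by_cases A3 : ⟪a 0, a 3⟫_ℂ = 0
      · exact Or.inl (half_sigma a c ha hc horth (Equiv.swap 2 3) (by simpa [Equiv.swap_apply_def] using A1)
          (by simpa [Equiv.swap_apply_def] using A3))
      · exact Or.inr (half_sigma c a hc ha horth' σ₂ (by simpa [hσ₂, Equiv.swap_apply_def] using hC 2 (by decide) A2)
          (by simpa [hσ₂, Equiv.swap_apply_def] using hC 3 (by decide) A3))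
  · by_cases A2 : ⟪a 0, a 2⟫_ℂ = 0
    · by_cases A3 : ⟪a 0, a 3⟫_ℂ = 0
      · exact Or.inl (half_sigma a c ha hc horth σ₂ (by simpa [hσ₂, Equiv.swap_apply_def] using A2)
          (by simpa [hσ₂, Equiv.swap_apply_def] using A3))
      · exact Or.inr (half_sigma c a hc ha horth' (Equiv.swap 2 3)
          (by simpa [Equiv.swap_apply_def] using hC 1 (by decide) A1) (by simpa [Equiv.swap_apply_def] using hC 3 (by decide) A3))
    · exact Or.inr (half_sigma c a hc ha horth' (Equiv.refl _)
        (hC 1 (by decide) A1) (hC 2 (by decide) A2))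

lemma pairT_smul_left (s : Bool) (r : ℂ) (x y : Qubit) :
    pairT s (r • x) y = r • pairT s x y := by
  cases s <;> simp [pairT, tens_smul_left, tens_smul_right]

lemma assemble (B : Finset (NQubit 2)) (e : Fin 4 ≃ {v // v ∈ B}) (s : Bool)
    (A C : Fin 4 → Qubit) (hA : ∀ i, ‖A i‖ = 1) (hC : ∀ i, ‖C i‖ = 1)
    (hv : ∀ i, (e i : NQubit 2) = pairT s (A i) (C i))
    (π : Equiv.Perm (Fin 4)) (hg : Good A C π) :
    ∃ ψ₁ ψ₁p ψ₂ ψ₂p ψ₃ ψ₃p : Qubit,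
      ‖ψ₁‖ = 1 ∧ ‖ψ₁p‖ = 1 ∧ ‖ψ₂‖ = 1 ∧ ‖ψ₂p‖ = 1 ∧ ‖ψ₃‖ = 1 ∧ ‖ψ₃p‖ = 1 ∧
      ⟪ψ₁, ψ₁p⟫_ℂ = 0 ∧ ⟪ψ₂, ψ₂p⟫_ℂ = 0 ∧ ⟪ψ₃, ψ₃p⟫_ℂ = 0 ∧
      ∃ (s : Bool) (b : Fin 4 ≃ {v // v ∈ B}) (u : Fin 4 → ℂ),
        (∀ i, ‖u i‖ = 1) ∧
        (b 0 : NQubit 2) = u 0 • pairT s ψ₁ ψ₂ ∧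
        (b 1 : NQubit 2) = u 1 • pairT s ψ₁ ψ₂p ∧
        (b 2 : NQubit 2) = u 2 • pairT s ψ₁p ψ₃ ∧
        (b 3 : NQubit 2) = u 3 • pairT s ψ₁p ψ₃p := by
  obtain ⟨hg1, hg2, hg3, ⟨u₁, hu₁, hp₁⟩, ⟨u₃, hu₃, hp₃⟩⟩ := hg
  refine ⟨A (π 0), A (π 2), C (π 0), C (π 1), C (π 2), C (π 3),
    hA _, hA _, hC _, hC _, hC _, hC _, hg1, hg2, hg3,
    s, π.trans e, ![1, u₁, 1, u₃], ?_, ?_, ?_, ?_, ?_⟩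
  · intro i; fin_cases i <;> simp [hu₁, hu₃]
  · show ((e (π 0) : {v // v ∈ B}) : NQubit 2) = _
    rw [hv (π 0)]
    simp
  · show ((e (π 1) : {v // v ∈ B}) : NQubit 2) = _
    rw [hv (π 1), hp₁, pairT_smul_left]
    simp
  · show ((e (π 2) : {v // v ∈ B}) : NQubit 2) = _
    rw [hv (π 2)]
    simp
  · show ((e (π 3) : {v // v ∈ B}) : NQubit 2) = _
    rw [hv (π 3), hp₃, pairT_smul_left]
    simp


/-- every orthonormal basis of `ℂ² ⊗ ℂ²` consisting of product vectors is,
up to reordering of its four elements, multiplication by unit phases and possibly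
swapping the two tensor factors, of the form
`{ψ₁⊗ψ₂, ψ₁⊗ψ₂^⊥, ψ₁^⊥⊗ψ₃, ψ₁^⊥⊗ψ₃^⊥}`. -/
theorem two_qubit_product_basis_structure
    (B : Finset (NQubit 2)) (hB : IsONBasis B) (hprod : ∀ v ∈ B, IsProduct v) :
    ∃ ψ₁ ψ₁p ψ₂ ψ₂p ψ₃ ψ₃p : Qubit,
      ‖ψ₁‖ = 1 ∧ ‖ψ₁p‖ = 1 ∧ ‖ψ₂‖ = 1 ∧ ‖ψ₂p‖ = 1 ∧ ‖ψ₃‖ = 1 ∧ ‖ψ₃p‖ = 1 ∧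
      ⟪ψ₁, ψ₁p⟫_ℂ = 0 ∧ ⟪ψ₂, ψ₂p⟫_ℂ = 0 ∧ ⟪ψ₃, ψ₃p⟫_ℂ = 0 ∧
      ∃ (s : Bool) (b : Fin 4 ≃ {v // v ∈ B}) (u : Fin 4 → ℂ),
        (∀ i, ‖u i‖ = 1) ∧
        (b 0 : NQubit 2) = u 0 • pairT s ψ₁ ψ₂ ∧
        (b 1 : NQubit 2) = u 1 • pairT s ψ₁ ψ₂p ∧
        (b 2 : NQubit 2) = u 2 • pairT s ψ₁p ψ₃ ∧
        (b 3 : NQubit 2) = u 3 • pairT s ψ₁p ψ₃p := by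
  obtain ⟨hon, hspan⟩ := hB
  -- B has 4 elements
  have hrange : Set.range (fun v : B => (v : NQubit 2)) = (B : Set (NQubit 2)) :=
    Subtype.range_coe
  have hcard : Fintype.card {v // v ∈ B} = 4 := by
    have hli := hon.linearIndependent
    have lb : Module.Basis {v // v ∈ B} ℂ (NQubit 2) :=
      Module.Basis.mk hli (by rw [hrange, hspan])
    have h4 : Module.finrank ℂ (NQubit 2) = 4 := by
      simp [finrank_euclideanSpace]
    rw [← h4, Module.finrank_eq_card_basis lb]
  let e : Fin 4 ≃ {v // v ∈ B} := (Fintype.equivFinOfCardEq hcard).symm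
  -- unit-norm product decomposition of each basis element
  have key : ∀ i : Fin 4, ∃ a c : Qubit, ‖a‖ = 1 ∧ ‖c‖ = 1 ∧
      (e i : NQubit 2) = tens ![a, c] := by
    intro i
    obtain ⟨ψ, hψ⟩ := hprod (e i) (e i).2
    have harr : ![ψ 0, ψ 1] = ψ := by
      funext j
      fin_cases j <;> rfl
    have hψ2 : (e i : NQubit 2) = tens ![ψ 0, ψ 1] := by rw [harr, hψ]
    have hnorm : ‖(e i : NQubit 2)‖ = 1 := hon.1 (e i)
    have hx : ⟪(e i : NQubit 2), (e i : NQubit 2)⟫_ℂ = (‖ψ 0‖ : ℂ) ^ 2 * (‖ψ 1‖ : ℂ) ^ 2 := by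
      rw [hψ2, inner_tens]
      simp [inner_self_eq_norm_sq_to_K]
    have hy : ⟪(e i : NQubit 2), (e i : NQubit 2)⟫_ℂ = 1 := by
      rw [inner_self_eq_norm_sq_to_K, hnorm]
      norm_num
    have h2 : ((‖ψ 0‖ * ‖ψ 1‖ : ℝ) : ℂ) ^ 2 = 1 := by
      push_cast
      rw [mul_pow, ← hx, hy]
    have h3 : (‖ψ 0‖ * ‖ψ 1‖ : ℝ) ^ 2 = 1 := by exact_mod_cast h2
    have hmul : ‖ψ 0‖ * ‖ψ 1‖ = 1 := by
      have hfac : (‖ψ 0‖ * ‖ψ 1‖ - 1) * (‖ψ 0‖ * ‖ψ 1‖ + 1) = 0 := by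
        linear_combination h3
      rcases mul_eq_zero.1 hfac with h | h
      · linarith
      · nlinarith [mul_nonneg (norm_nonneg (ψ 0)) (norm_nonneg (ψ 1))]
    have h0 : ‖ψ 0‖ ≠ 0 := by
      intro h; rw [h, zero_mul] at hmul; exact one_ne_zero hmul.symm
    refine ⟨((‖ψ 0‖ : ℂ))⁻¹ • ψ 0, (‖ψ 0‖ : ℂ) • ψ 1, ?_, ?_, ?_⟩
    · rw [norm_smul]
      simp [h0]
    · rw [norm_smul]
      simpa using hmul
    · rw [tens_smul_left, tens_smul_right, smul_smul]
      rw [inv_mul_cancel₀ (by exact_mod_cast h0), one_smul, hψ2]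
  choose a c ha hc hv using key
  -- orthogonality relations
  have horth : ∀ i j : Fin 4, i ≠ j → ⟪a i, a j⟫_ℂ * ⟪c i, c j⟫_ℂ = 0 := by
    intro i j hij
    have hne : (e i : NQubit 2) ≠ (e j : NQubit 2) := by
      intro h
      exact hij (e.injective (Subtype.coe_injective h))
    have h0 : ⟪(e i : NQubit 2), (e j : NQubit 2)⟫_ℂ = 0 :=
      hon.2 (fun h => hne (congrArg _ h))
    rw [hv i, hv j, inner_tens] at h0
    simpa using h0
  rcases matching a c ha hc horth with ⟨π, hg⟩ | ⟨π, hg⟩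
  · exact assemble B e false a c ha hc (fun i => by rw [hv i]; simp [pairT]) π hg
  · exact assemble B e true c a hc ha (fun i => by rw [hv i]; simp [pairT]) π hg

end
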